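/- arXiv:1204.3176 — 3 statements merged into one kernel-verified Lean document; each statement's English description precedes it below -/
import Mathlib

section
/- Let γ : ℕ → ℝ be nonnegative and nonincreasing (0 ≤ γ(s) ≤ γ(t) whenever s ≥ t). Then for all integers n ≥ 1 and d ≥ 1, d·S(n, d) ≤ S(n·d, 1), where S(n, d) = Σ_{k=1}^{n} Σ_{l=1}^{n} γ(d·|k−l|). Equivalently, the variance σ²(ȳ_b) = S(n,d)/n² of the average of n samples taken every d cycles and the variance σ²(ȳ_a) = S(nd,1)/(nd)² of the average of all nd consecutive samples satisfy σ²(ȳ_b)/d ≤ σ²(ȳ_a). (Left inequality of Theorem 5.2 / Eq. (23).) -/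
open Finset

lemma sum_Icc_mul_block (F : ℕ → ℝ) (n d : ℕ) :
    ∑ x ∈ Icc 1 (n * d), F x = ∑ k ∈ Icc 1 n, ∑ i ∈ Icc 1 d, F ((k - 1) * d + i) := by
  induction n with
  | zero => simp
  | succ n ih =>
    have h1 : (n + 1) * d = n * d + d := by ring
    rw [h1, show (1 : ℕ) = 0 + 1 from rfl, Finset.Icc_add_one_left_eq_Ioc,
      ← Finset.sum_Ioc_consecutive F (Nat.zero_le (n * d)) (Nat.le_add_right _ d)]
    rw [← Finset.Icc_add_one_left_eq_Ioc, show (0 + 1 : ℕ) = 1 from rfl, ih]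
    rw [Finset.sum_Icc_succ_top (Nat.one_le_iff_ne_zero.mpr (Nat.succ_ne_zero n))]
    congr 1
    have : Ioc (n * d) (n * d + d) = (Ioc 0 d).map (addLeftEmbedding (n * d)) := by
      rw [Finset.map_add_left_Ioc]; simp
    rw [this, Finset.sum_map, ← Finset.Icc_add_one_left_eq_Ioc]
    apply Finset.sum_congr rfl
    intro i _
    simp [addLeftEmbedding, Nat.succ_sub_one]

/-- For a nonnegative nonincreasing autocovariance `γ`, `d·S(n, d) ≤ S(n·d, 1)`
where `S(n, d) = Σ_{k=1}^{n} Σ_{l=1}^{n} γ(d·|k−l|)`; equivalently, the variance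
`σ²(ȳ_b) = S(n,d)/n²` of the coarse average and the variance
`σ²(ȳ_a) = S(nd,1)/(nd)²` of the full average satisfy `σ²(ȳ_b)/d ≤ σ²(ȳ_a)`. -/
theorem coarse_variance_lower_bound (γ : ℕ → ℝ)
    (hγpos : ∀ t, 0 ≤ γ t) (hγ : Antitone γ)
    (n d : ℕ) (hn : 1 ≤ n) (hd : 1 ≤ d) :
    (d : ℝ) * ∑ k ∈ Icc 1 n, ∑ l ∈ Icc 1 n, γ (d * ((k : ℤ) - (l : ℤ)).natAbs) ≤
      (∑ k ∈ Icc 1 (n * d), ∑ l ∈ Icc 1 (n * d), γ (1 * ((k : ℤ) - (l : ℤ)).natAbs)) ∧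
    ((∑ k ∈ Icc 1 n, ∑ l ∈ Icc 1 n, γ (d * ((k : ℤ) - (l : ℤ)).natAbs)) / (n : ℝ) ^ 2) / (d : ℝ)
      ≤ (∑ k ∈ Icc 1 (n * d), ∑ l ∈ Icc 1 (n * d), γ (1 * ((k : ℤ) - (l : ℤ)).natAbs)) /
          ((n : ℝ) * (d : ℝ)) ^ 2 := by
  have key : (d : ℝ) * ∑ k ∈ Icc 1 n, ∑ l ∈ Icc 1 n, γ (d * ((k : ℤ) - (l : ℤ)).natAbs) ≤
      (∑ k ∈ Icc 1 (n * d), ∑ l ∈ Icc 1 (n * d), γ (1 * ((k : ℤ) - (l : ℤ)).natAbs)) := by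
    rw [sum_Icc_mul_block (fun x => ∑ l ∈ Icc 1 (n * d), γ (1 * ((x : ℤ) - (l : ℤ)).natAbs)) n d]
    have hinner : ∀ k ∈ Icc 1 n,
        (∑ i ∈ Icc 1 d, ∑ l ∈ Icc 1 (n * d), γ (1 * ((((k-1)*d+i : ℕ) : ℤ) - (l : ℤ)).natAbs))
        = ∑ i ∈ Icc 1 d, ∑ l ∈ Icc 1 n, ∑ j ∈ Icc 1 d,
            γ (1 * ((((k-1)*d+i : ℕ) : ℤ) - (((l-1)*d+j : ℕ) : ℤ)).natAbs) := by
      intro k _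
      apply Finset.sum_congr rfl
      intro i _
      exact sum_Icc_mul_block (fun l => γ (1 * ((((k-1)*d+i : ℕ) : ℤ) - (l : ℤ)).natAbs)) n d
    rw [Finset.sum_congr rfl hinner]
    rw [Finset.mul_sum]
    apply Finset.sum_le_sum
    intro k hk
    rw [Finset.sum_comm]
    rw [Finset.mul_sum]
    apply Finset.sum_le_sum
    intro l hl
    have hk1 : 1 ≤ k := (Finset.mem_Icc.mp hk).1
    have hl1 : 1 ≤ l := (Finset.mem_Icc.mp hl).1
    have hdiag : ∀ i, 1 * ((((k-1)*d+i : ℕ) : ℤ) - (((l-1)*d+i : ℕ) : ℤ)).natAbs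
        = d * ((k : ℤ) - (l : ℤ)).natAbs := by
      intro i
      have hcast : ((((k-1)*d+i : ℕ) : ℤ) - (((l-1)*d+i : ℕ) : ℤ))
          = ((k : ℤ) - (l : ℤ)) * (d : ℤ) := by
        push_cast [Nat.cast_sub hk1, Nat.cast_sub hl1]
        ring
      rw [hcast, Int.natAbs_mul, Int.natAbs_natCast, one_mul, Nat.mul_comm]
    calc (d : ℝ) * γ (d * ((k : ℤ) - (l : ℤ)).natAbs)
        = ∑ i ∈ Icc 1 d, γ (d * ((k : ℤ) - (l : ℤ)).natAbs) := by
          rw [Finset.sum_const, Nat.card_Icc]; simp [nsmul_eq_mul]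
      _ ≤ ∑ i ∈ Icc 1 d, ∑ j ∈ Icc 1 d,
            γ (1 * ((((k-1)*d+i : ℕ) : ℤ) - (((l-1)*d+j : ℕ) : ℤ)).natAbs) := by
          apply Finset.sum_le_sum
          intro i hi
          have := Finset.single_le_sum
            (f := fun j => γ (1 * ((((k-1)*d+i : ℕ) : ℤ) - (((l-1)*d+j : ℕ) : ℤ)).natAbs))
            (fun j _ => hγpos _) hi
          calc γ (d * ((k : ℤ) - (l : ℤ)).natAbs)
              = γ (1 * ((((k-1)*d+i : ℕ) : ℤ) - (((l-1)*d+i : ℕ) : ℤ)).natAbs) := by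
                rw [hdiag i]
            _ ≤ _ := this
  refine ⟨key, ?_⟩
  have hn0 : (0 : ℝ) < n := by exact_mod_cast hn
  have hd0 : (0 : ℝ) < d := by exact_mod_cast hd
  rw [div_div, div_le_div_iff₀ (by positivity) (by positivity)]
  nlinarith [mul_le_mul_of_nonneg_right key (show (0:ℝ) ≤ (n:ℝ)^2 * d by positivity)]
end

section
/- Let d ≥ 1 and n ≥ 1 be integers and let γ : ℕ → ℝ satisfy: (i) γ(t) ≤ γ(0) for all 1 ≤ t ≤ d−1, and (ii) the per-interval concavity condition γ(d·k − δ) + γ(d·k + δ) ≤ 2·γ(d·k) for all integers k ≥ 1 and 1 ≤ δ ≤ d−1 (this holds with equality when γ is linear on each interval of length d, the paper's linear-interpolation assumption valid when d is much smaller than the maximal correlation interval). Then S(n·d, 1) ≤ d²·S(n, d), where S(n, d) = Σ_{k=1}^{n} Σ_{l=1}^{n} γ(d·|k−l|). Equivalently, the variance of the average of all nd consecutive samples is at most that of the average of the n samples taken every d cycles: σ²(ȳ_a) ≤ σ²(ȳ_b). (Right inequality of Theorem 5.2 / Eq. (23).) -/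
open Finset

private lemma block_reindex_aux (n d : ℕ) (hd : 1 ≤ d) (f : ℕ → ℝ) :
    ∑ k ∈ Icc 1 (n * d), f k = ∑ a ∈ Icc 1 n, ∑ i ∈ Icc 1 d, f ((a - 1) * d + i) := by
  rw [← Finset.sum_product']
  refine Finset.sum_nbij' (fun k => ((k - 1) / d + 1, (k - 1) % d + 1))
    (fun p => (p.1 - 1) * d + p.2) ?_ ?_ ?_ ?_ ?_
  · intro k hk
    simp only [Finset.mem_Icc, Finset.mem_product] at hk ⊢
    beta_reduce
    obtain ⟨h1, h2⟩ := hk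
    have hmod : (k - 1) % d < d := Nat.mod_lt _ (by omega)
    have hdiv : (k - 1) / d < n := Nat.div_lt_of_lt_mul (by rw [Nat.mul_comm]; omega)
    generalize (k-1)/d = q at hdiv ⊢
    generalize (k-1)%d = r at hmod ⊢
    omega
  · intro p hp
    simp only [Finset.mem_Icc, Finset.mem_product] at hp ⊢
    obtain ⟨⟨h1, h2⟩, h3, h4⟩ := hp
    have h5 : (p.1 - 1) * d ≤ (n - 1) * d := Nat.mul_le_mul_right _ (by omega)
    have h6 : (n - 1) * d + d = n * d := by
      rw [Nat.sub_one_mul]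
      have : d ≤ n * d := Nat.le_mul_of_pos_left d (by omega)
      omega
    omega
  · intro k hk
    simp only [Finset.mem_Icc] at hk
    beta_reduce
    simp only [Nat.add_sub_cancel]
    have h := Nat.div_add_mod' (k - 1) d
    generalize hq : (k-1)/d = q at h ⊢
    generalize (k-1)%d = r at h ⊢
    generalize q * d = s at h ⊢
    omega
  · intro p hp
    simp only [Finset.mem_Icc, Finset.mem_product] at hp
    obtain ⟨⟨h1, h2⟩, h3, h4⟩ := hp
    obtain ⟨p1, p2⟩ := p
    simp only at h1 h2 h3 h4
    beta_reduce
    have key : (p1 - 1) * d + p2 - 1 = d * (p1 - 1) + (p2 - 1) := by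
      rw [Nat.mul_comm]; omega
    have hdiv : (d * (p1 - 1) + (p2 - 1)) / d = p1 - 1 := by
      rw [Nat.mul_add_div (by omega), Nat.div_eq_of_lt (by omega)]; omega
    have hmod : (d * (p1 - 1) + (p2 - 1)) % d = p2 - 1 := by
      rw [Nat.mul_add_mod, Nat.mod_eq_of_lt (by omega)]
    rw [key, Prod.mk.injEq, hdiv, hmod]
    omega
  · intro k hk
    simp only [Finset.mem_Icc] at hk
    beta_reduce
    congr 1
    simp only [Nat.add_sub_cancel]
    have h := Nat.div_add_mod' (k - 1) d
    generalize hq : (k-1)/d = q at h ⊢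
    generalize (k-1)%d = r at h ⊢
    generalize q * d = s at h ⊢
    omega


lemma conc_key_nonneg (γ : ℕ → ℝ) (d : ℕ) (hd : 1 ≤ d)
    (hγ0 : ∀ t, 1 ≤ t → t ≤ d - 1 → γ t ≤ γ 0)
    (hconc : ∀ k, 1 ≤ k → ∀ δ, 1 ≤ δ → δ ≤ d - 1 →
      γ (d * k - δ) + γ (d * k + δ) ≤ 2 * γ (d * k))
    (m : ℕ) (e : ℤ) (he : e.natAbs ≤ d - 1) :
    γ (((d : ℤ) * m + e).natAbs) + γ (((d : ℤ) * m - e).natAbs) ≤ 2 * γ (d * m) := by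
  set δ := e.natAbs with hδ
  rcases Nat.eq_zero_or_pos m with rfl | hm
  · simp only [Nat.cast_zero, Nat.mul_zero, mul_zero, zero_add, zero_sub, Int.natAbs_neg]
    rcases Nat.eq_zero_or_pos δ with h0 | h0
    · rw [show e.natAbs = 0 from h0]; linarith
    · have := hγ0 δ h0 he; linarith
  · have htd : d ≤ d * m := Nat.le_mul_of_pos_right d hm
    have ht : (d : ℤ) * m = ((d * m : ℕ) : ℤ) := by push_cast; ring
    rw [ht]
    have hdm : δ ≤ d * m := by omega
    rcases Nat.eq_zero_or_pos δ with h0 | h0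
    · have he0 : e = 0 := by omega
      rw [he0, add_zero, sub_zero, Int.natAbs_natCast]
      linarith
    · have hcc := hconc m hm δ h0 he
      rcases le_or_gt 0 e with hpos | hneg
      · have h1 : (((d * m : ℕ) : ℤ) + e).natAbs = d * m + δ := by omega
        have h2 : (((d * m : ℕ) : ℤ) - e).natAbs = d * m - δ := by omega
        rw [h1, h2]; linarith
      · have h1 : (((d * m : ℕ) : ℤ) + e).natAbs = d * m - δ := by omega
        have h2 : (((d * m : ℕ) : ℤ) - e).natAbs = d * m + δ := by omega
        rw [h1, h2]; linarith

lemma conc_key (γ : ℕ → ℝ) (d : ℕ) (hd : 1 ≤ d)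
    (hγ0 : ∀ t, 1 ≤ t → t ≤ d - 1 → γ t ≤ γ 0)
    (hconc : ∀ k, 1 ≤ k → ∀ δ, 1 ≤ δ → δ ≤ d - 1 →
      γ (d * k - δ) + γ (d * k + δ) ≤ 2 * γ (d * k))
    (M e : ℤ) (he : e.natAbs ≤ d - 1) :
    γ (((d : ℤ) * M + e).natAbs) + γ (((d : ℤ) * M - e).natAbs) ≤ 2 * γ (d * M.natAbs) := by
  rcases le_or_gt 0 M with hM | hM
  · have h : M = (M.natAbs : ℤ) := by omega
    rw [h]
    exact conc_key_nonneg γ d hd hγ0 hconc M.natAbs e he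
  · obtain ⟨m, hMm⟩ : ∃ m : ℕ, M = -(m : ℤ) := ⟨M.natAbs, by omega⟩
    have hma : M.natAbs = m := by omega
    rw [hma]
    subst hMm
    have e1 : (d : ℤ) * (-(m : ℤ)) + e = -((d : ℤ) * m - e) := by ring
    have e2 : (d : ℤ) * (-(m : ℤ)) - e = -((d : ℤ) * m + e) := by ring
    rw [e1, e2, Int.natAbs_neg, Int.natAbs_neg]
    have := conc_key_nonneg γ d hd hγ0 hconc m e he
    linarith


/-- If `γ(t) ≤ γ(0)` for `1 ≤ t ≤ d−1` and `γ` satisfies the per-interval concavity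
condition `γ(d·k − δ) + γ(d·k + δ) ≤ 2·γ(d·k)` for `k ≥ 1`, `1 ≤ δ ≤ d−1`, then
`S(n·d, 1) ≤ d²·S(n, d)` where `S(n, d) = Σ_{k=1}^{n} Σ_{l=1}^{n} γ(d·|k−l|)`;
equivalently the variance `σ²(ȳ_a) = S(nd,1)/(nd)²` of the full average is at most
the variance `σ²(ȳ_b) = S(n,d)/n²` of the coarse average. -/
theorem full_variance_upper_bound (γ : ℕ → ℝ) (n d : ℕ) (hn : 1 ≤ n) (hd : 1 ≤ d)
    (hγ0 : ∀ t, 1 ≤ t → t ≤ d - 1 → γ t ≤ γ 0)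
    (hconc : ∀ k, 1 ≤ k → ∀ δ, 1 ≤ δ → δ ≤ d - 1 →
      γ (d * k - δ) + γ (d * k + δ) ≤ 2 * γ (d * k)) :
    (∑ k ∈ Icc 1 (n * d), ∑ l ∈ Icc 1 (n * d), γ (1 * ((k : ℤ) - (l : ℤ)).natAbs)) ≤
      (d : ℝ) ^ 2 *
        (∑ k ∈ Icc 1 n, ∑ l ∈ Icc 1 n, γ (d * ((k : ℤ) - (l : ℤ)).natAbs)) ∧
    (∑ k ∈ Icc 1 (n * d), ∑ l ∈ Icc 1 (n * d), γ (1 * ((k : ℤ) - (l : ℤ)).natAbs)) /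
        ((n : ℝ) * (d : ℝ)) ^ 2 ≤
      (∑ k ∈ Icc 1 n, ∑ l ∈ Icc 1 n, γ (d * ((k : ℤ) - (l : ℤ)).natAbs)) / (n : ℝ) ^ 2 := by
  have block_reindex := block_reindex_aux n d hd
  have conc_key := conc_key γ d hd hγ0 hconc
  have hdd : ∀ c : ℝ, ∑ _i ∈ Icc 1 d, ∑ _j ∈ Icc 1 d, c = (d : ℝ) * ((d : ℝ) * c) := by
    intro c
    simp [Finset.sum_const, Nat.card_Icc, nsmul_eq_mul]
  have hmain : (∑ k ∈ Icc 1 (n * d), ∑ l ∈ Icc 1 (n * d), γ (1 * ((k : ℤ) - (l : ℤ)).natAbs)) ≤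
      (d : ℝ) ^ 2 * (∑ k ∈ Icc 1 n, ∑ l ∈ Icc 1 n, γ (d * ((k : ℤ) - (l : ℤ)).natAbs)) := by
    simp only [one_mul]
    calc ∑ k ∈ Icc 1 (n * d), ∑ l ∈ Icc 1 (n * d), γ (((k : ℤ) - (l : ℤ)).natAbs)
        = ∑ a ∈ Icc 1 n, ∑ i ∈ Icc 1 d, ∑ b ∈ Icc 1 n, ∑ j ∈ Icc 1 d,
            γ (((d : ℤ) * ((a : ℤ) - (b : ℤ)) + ((i : ℤ) - (j : ℤ))).natAbs) := by
          rw [block_reindex]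
          refine Finset.sum_congr rfl fun a ha => Finset.sum_congr rfl fun i hi => ?_
          rw [block_reindex]
          refine Finset.sum_congr rfl fun b hb => Finset.sum_congr rfl fun j hj => ?_
          simp only [Finset.mem_Icc] at ha hb
          have ca : (((a - 1) * d + i : ℕ) : ℤ) = ((a : ℤ) - 1) * d + i := by
            have : ((a - 1 : ℕ) : ℤ) = (a : ℤ) - 1 := by omega
            push_cast [this]; ring
          have cb : (((b - 1) * d + j : ℕ) : ℤ) = ((b : ℤ) - 1) * d + j := by
            have : ((b - 1 : ℕ) : ℤ) = (b : ℤ) - 1 := by omega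
            push_cast [this]; ring
          rw [show ((((a - 1) * d + i : ℕ) : ℤ) - (((b - 1) * d + j : ℕ) : ℤ))
              = (d : ℤ) * ((a : ℤ) - (b : ℤ)) + ((i : ℤ) - (j : ℤ)) by rw [ca, cb]; ring]
      _ = ∑ a ∈ Icc 1 n, ∑ b ∈ Icc 1 n, ∑ i ∈ Icc 1 d, ∑ j ∈ Icc 1 d,
            γ (((d : ℤ) * ((a : ℤ) - (b : ℤ)) + ((i : ℤ) - (j : ℤ))).natAbs) := by
          exact Finset.sum_congr rfl fun a _ => Finset.sum_comm
      _ ≤ ∑ a ∈ Icc 1 n, ∑ b ∈ Icc 1 n, ∑ _i ∈ Icc 1 d, ∑ _j ∈ Icc 1 d,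
            γ (d * ((a : ℤ) - (b : ℤ)).natAbs) := by
          refine Finset.sum_le_sum fun a _ => Finset.sum_le_sum fun b _ => ?_
          set M : ℤ := (a : ℤ) - (b : ℤ) with hM
          set T := ∑ i ∈ Icc 1 d, ∑ j ∈ Icc 1 d,
            γ (((d : ℤ) * M + ((i : ℤ) - (j : ℤ))).natAbs) with hT
          have hsymm : T = ∑ i ∈ Icc 1 d, ∑ j ∈ Icc 1 d,
              γ (((d : ℤ) * M + ((j : ℤ) - (i : ℤ))).natAbs) := Finset.sum_comm
          have h2T : T + T ≤ ∑ _i ∈ Icc 1 d, ∑ _j ∈ Icc 1 d, 2 * γ (d * M.natAbs) := by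
            calc T + T = ∑ i ∈ Icc 1 d, ∑ j ∈ Icc 1 d,
                (γ (((d : ℤ) * M + ((i : ℤ) - (j : ℤ))).natAbs) +
                  γ (((d : ℤ) * M + ((j : ℤ) - (i : ℤ))).natAbs)) := by
                  nth_rewrite 2 [hsymm]
                  rw [hT, ← Finset.sum_add_distrib]
                  exact Finset.sum_congr rfl fun i _ => by rw [← Finset.sum_add_distrib]
              _ ≤ _ := by
                  refine Finset.sum_le_sum fun i hi => Finset.sum_le_sum fun j hj => ?_
                  simp only [Finset.mem_Icc] at hi hj
                  have he : ((i : ℤ) - (j : ℤ)).natAbs ≤ d - 1 := by omega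
                  have hkey := conc_key M ((i : ℤ) - (j : ℤ)) he
                  have hji : (d : ℤ) * M - ((i : ℤ) - (j : ℤ))
                      = (d : ℤ) * M + ((j : ℤ) - (i : ℤ)) := by ring
                  rw [hji] at hkey
                  exact hkey
          rw [hdd] at h2T
          rw [hdd]
          linarith
      _ = (d : ℝ) ^ 2 * ∑ a ∈ Icc 1 n, ∑ b ∈ Icc 1 n, γ (d * ((a : ℤ) - (b : ℤ)).natAbs) := by
          rw [Finset.mul_sum]
          refine Finset.sum_congr rfl fun a _ => ?_
          rw [Finset.mul_sum]
          refine Finset.sum_congr rfl fun b _ => ?_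
          rw [hdd]; ring
  refine ⟨hmain, ?_⟩
  have hn' : (0 : ℝ) < n := by exact_mod_cast hn
  have hd' : (0 : ℝ) < d := by exact_mod_cast hd
  calc (∑ k ∈ Icc 1 (n * d), ∑ l ∈ Icc 1 (n * d), γ (1 * ((k : ℤ) - (l : ℤ)).natAbs)) /
        ((n : ℝ) * (d : ℝ)) ^ 2
      ≤ ((d : ℝ) ^ 2 * (∑ k ∈ Icc 1 n, ∑ l ∈ Icc 1 n, γ (d * ((k : ℤ) - (l : ℤ)).natAbs))) /
        ((n : ℝ) * (d : ℝ)) ^ 2 := by gcongr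
    _ = (∑ k ∈ Icc 1 n, ∑ l ∈ Icc 1 n, γ (d * ((k : ℤ) - (l : ℤ)).natAbs)) / (n : ℝ) ^ 2 := by
        field_simp
end

section
/- Let X_1, X_2, …, X_{nd} be square-integrable real random variables with all expectations equal and Cov(X_i, X_j) = γ(|i−j|), where γ : ℕ → ℝ is nonnegative and nonincreasing and satisfies γ(d·k − δ) + γ(d·k + δ) ≤ 2·γ(d·k) for all integers k ≥ 1 and 1 ≤ δ ≤ d−1. Let ȳ_a = (1/(nd))·Σ_{i=1}^{nd} X_i be the average over all samples and ȳ_b = (1/n)·Σ_{k=1}^{n} X_{(k−1)d+1} the average over the coarse sample set with sampling interval d. Then Var(ȳ_b)/d ≤ Var(ȳ_a) ≤ Var(ȳ_b). (Theorem 5.2.) -/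
open MeasureTheory ProbabilityTheory Finset

private lemma l2_mul_integrable {Ω : Type*} [MeasurableSpace Ω] {μ : Measure Ω}
    {f g : Ω → ℝ} (hf : MemLp f 2 μ) (hg : MemLp g 2 μ) :
    Integrable (fun ω => f ω * g ω) μ := by
  rw [← memLp_one_iff_integrable]
  exact hg.smul (r := 1) hf

private lemma variance_const_mul_sum {Ω : Type*} [MeasurableSpace Ω] (μ : Measure Ω)
    [IsProbabilityMeasure μ] (s : Finset ℕ) (c : ℝ) (X : ℕ → Ω → ℝ)
    (hX : ∀ i ∈ s, MemLp (X i) 2 μ) :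
    variance (fun ω => c * ∑ i ∈ s, X i ω) μ
      = c ^ 2 * ∑ i ∈ s, ∑ j ∈ s,
          ∫ ω, (X i ω - ∫ ω', X i ω' ∂μ) * (X j ω - ∫ ω', X j ω' ∂μ) ∂μ := by
  classical
  have hint : ∀ i ∈ s, Integrable (X i) μ := fun i hi => (hX i hi).integrable one_le_two
  have hY2 : ∀ i ∈ s, MemLp (fun ω => X i ω - ∫ ω', X i ω' ∂μ) 2 μ :=
    fun i hi => (hX i hi).sub (memLp_const _)
  have hij : ∀ i ∈ s, ∀ j ∈ s, Integrable
      (fun ω => (X i ω - ∫ ω', X i ω' ∂μ) * (X j ω - ∫ ω', X j ω' ∂μ)) μ :=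
    fun i hi j hj => l2_mul_integrable (hY2 i hi) (hY2 j hj)
  have hf2 : MemLp (fun ω => c * ∑ i ∈ s, X i ω) 2 μ :=
    (memLp_finset_sum s hX).const_mul c
  have hmeanEq : (∫ ω, (c * ∑ i ∈ s, X i ω) ∂μ) = c * ∑ i ∈ s, ∫ ω', X i ω' ∂μ := by
    rw [integral_const_mul, integral_finset_sum s hint]
  rw [variance_eq_integral hf2.aemeasurable]
  change ∫ ω, ((((fun ω => c * ∑ i ∈ s, X i ω) - fun _ => ∫ ω, (c * ∑ i ∈ s, X i ω) ∂μ) ^ (2 : ℕ) : Ω → ℝ)) ω ∂μ = _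
  have hpt : ((fun ω => c * ∑ i ∈ s, X i ω)
        - fun _ => ∫ ω, (c * ∑ i ∈ s, X i ω) ∂μ) ^ (2 : ℕ)
      = fun ω => c ^ 2 * ∑ i ∈ s, ∑ j ∈ s,
          (X i ω - ∫ ω', X i ω' ∂μ) * (X j ω - ∫ ω', X j ω' ∂μ) := by
    funext ω
    simp only [Pi.pow_apply, Pi.sub_apply, hmeanEq]
    rw [← mul_sub, ← Finset.sum_sub_distrib, mul_pow]
    congr 1
    rw [sq, Finset.sum_mul_sum]
  rw [hpt, integral_const_mul]
  congr 1
  rw [integral_finset_sum s (fun i hi => integrable_finset_sum s (hij i hi))]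
  exact Finset.sum_congr rfl fun i hi => integral_finset_sum s (hij i hi)

private lemma sum_Icc_one_eq (n : ℕ) (G : ℕ → ℝ) :
    ∑ k ∈ Icc 1 n, G k = ∑ k : Fin n, G ((k : ℕ) + 1) := by
  rw [Fin.sum_univ_eq_sum_range (fun k => G (k + 1)) n]
  refine Finset.sum_nbij' (fun k => k - 1) (fun k => k + 1) ?_ ?_ ?_ ?_ ?_
  · intro a ha; simp only [Finset.mem_Icc] at ha; simp only [Finset.mem_range]; omega
  · intro a ha; simp only [Finset.mem_range] at ha; simp only [Finset.mem_Icc]; omega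
  · intro a ha; simp only [Finset.mem_Icc] at ha; beta_reduce; omega
  · intro a _; beta_reduce; omega
  · intro a ha; simp only [Finset.mem_Icc] at ha
    beta_reduce
    congr 1
    omega

private lemma sum_Icc_mul_eq (n d : ℕ) (F : ℕ → ℝ) :
    ∑ i ∈ Icc 1 (n * d), F i
      = ∑ k : Fin n, ∑ r : Fin d, F ((k : ℕ) * d + (r : ℕ) + 1) := by
  rw [sum_Icc_one_eq (n * d) F,
    ← Equiv.sum_comp finProdFinEquiv (fun i : Fin (n * d) => F ((i : ℕ) + 1)),
    Fintype.sum_prod_type]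
  refine Finset.sum_congr rfl fun k _ => Finset.sum_congr rfl fun r _ => ?_
  simp only [finProdFinEquiv_apply_val]
  congr 1
  ring

private lemma pair_bound (d : ℕ) (hd : 1 ≤ d) (γ : ℕ → ℝ) (hγanti : Antitone γ)
    (hconc : ∀ k, 1 ≤ k → ∀ δ, 1 ≤ δ → δ ≤ d - 1 →
      γ (d * k - δ) + γ (d * k + δ) ≤ 2 * γ (d * k))
    (e δ' : ℤ) (hδ : δ'.natAbs ≤ d - 1) :
    γ (((d : ℤ) * e + δ').natAbs) + γ (((d : ℤ) * e - δ').natAbs)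
      ≤ 2 * γ (((d : ℤ) * e).natAbs) := by
  rcases eq_or_ne e 0 with rfl | he
  · simp only [mul_zero, zero_add, zero_sub, Int.natAbs_neg, Int.natAbs_zero]
    have h := hγanti (Nat.zero_le δ'.natAbs)
    linarith
  · have h1 : ((d : ℤ) * e).natAbs = d * e.natAbs := by
      rw [Int.natAbs_mul, Int.natAbs_natCast]
    have hke : 1 ≤ e.natAbs := by omega
    have hM : δ'.natAbs ≤ ((d : ℤ) * e).natAbs := by
      rw [h1]
      calc δ'.natAbs ≤ d - 1 := hδ
        _ ≤ d * 1 := by omega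
        _ ≤ d * e.natAbs := Nat.mul_le_mul_left d hke
    rcases Nat.eq_zero_or_pos δ'.natAbs with h0 | hpos
    · have hz : δ' = 0 := by omega
      subst hz
      simp only [add_zero, sub_zero, two_mul, le_refl]
    · have key : (((d : ℤ) * e + δ').natAbs = ((d : ℤ) * e).natAbs + δ'.natAbs ∧
          ((d : ℤ) * e - δ').natAbs = ((d : ℤ) * e).natAbs - δ'.natAbs) ∨
          (((d : ℤ) * e + δ').natAbs = ((d : ℤ) * e).natAbs - δ'.natAbs ∧
          ((d : ℤ) * e - δ').natAbs = ((d : ℤ) * e).natAbs + δ'.natAbs) := by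
        generalize (d : ℤ) * e = E at hM ⊢
        omega
      have hc := hconc e.natAbs hke δ'.natAbs hpos hδ
      rw [← h1] at hc
      rcases key with ⟨ha, hb⟩ | ⟨ha, hb⟩ <;> rw [ha, hb] <;> linarith

private lemma block_bounds (d : ℕ) (hd : 1 ≤ d) (γ : ℕ → ℝ) (hγpos : ∀ t, 0 ≤ γ t)
    (hγanti : Antitone γ)
    (hconc : ∀ k, 1 ≤ k → ∀ δ, 1 ≤ δ → δ ≤ d - 1 →
      γ (d * k - δ) + γ (d * k + δ) ≤ 2 * γ (d * k))
    (e : ℤ) :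
    (d : ℝ) * γ (((d : ℤ) * e).natAbs)
        ≤ (∑ r : Fin d, ∑ s : Fin d, γ (((d : ℤ) * e + (r : ℕ) - (s : ℕ)).natAbs)) ∧
      (∑ r : Fin d, ∑ s : Fin d, γ (((d : ℤ) * e + (r : ℕ) - (s : ℕ)).natAbs))
        ≤ (d : ℝ) ^ 2 * γ (((d : ℤ) * e).natAbs) := by
  constructor
  · have hconst : (d : ℝ) * γ (((d : ℤ) * e).natAbs)
        = ∑ _r : Fin d, γ (((d : ℤ) * e).natAbs) := by
      simp [Finset.sum_const, Finset.card_univ, mul_comm]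
    rw [hconst]
    refine Finset.sum_le_sum fun r _ => ?_
    have hrr : γ (((d : ℤ) * e).natAbs)
        = γ (((d : ℤ) * e + (r : ℕ) - (r : ℕ)).natAbs) := by
      rw [show ((d : ℤ) * e + (r : ℕ) - (r : ℕ)) = (d : ℤ) * e by ring]
    rw [hrr]
    exact Finset.single_le_sum
      (f := fun s : Fin d => γ (((d : ℤ) * e + (r : ℕ) - ((s : ℕ) : ℤ)).natAbs))
      (fun s _ => hγpos _) (Finset.mem_univ r)
  · have key : ∀ r s : Fin d,
        γ (((d : ℤ) * e + (r : ℕ) - (s : ℕ)).natAbs)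
          + γ (((d : ℤ) * e + (s : ℕ) - (r : ℕ)).natAbs)
        ≤ 2 * γ (((d : ℤ) * e).natAbs) := by
      intro r s
      have hr := r.isLt
      have hs := s.isLt
      have hδ : (((r : ℕ) : ℤ) - ((s : ℕ) : ℤ)).natAbs ≤ d - 1 := by omega
      have h := pair_bound d hd γ hγanti hconc e (((r : ℕ) : ℤ) - ((s : ℕ) : ℤ)) hδ
      have e1 : (d : ℤ) * e + (((r : ℕ) : ℤ) - ((s : ℕ) : ℤ))
          = (d : ℤ) * e + (r : ℕ) - (s : ℕ) := by ring
      have e2 : (d : ℤ) * e - (((r : ℕ) : ℤ) - ((s : ℕ) : ℤ))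
          = (d : ℤ) * e + (s : ℕ) - (r : ℕ) := by ring
      rwa [e1, e2] at h
    have hswap : (∑ r : Fin d, ∑ s : Fin d, γ (((d : ℤ) * e + (r : ℕ) - (s : ℕ)).natAbs))
        = ∑ r : Fin d, ∑ s : Fin d, γ (((d : ℤ) * e + (s : ℕ) - (r : ℕ)).natAbs) :=
      Finset.sum_comm
    have hsum : 2 * (∑ r : Fin d, ∑ s : Fin d, γ (((d : ℤ) * e + (r : ℕ) - (s : ℕ)).natAbs))
        ≤ 2 * ((d : ℝ) ^ 2 * γ (((d : ℤ) * e).natAbs)) := by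
      have expand : 2 * (∑ r : Fin d, ∑ s : Fin d,
            γ (((d : ℤ) * e + (r : ℕ) - (s : ℕ)).natAbs))
          = ∑ r : Fin d, ∑ s : Fin d,
              (γ (((d : ℤ) * e + (r : ℕ) - (s : ℕ)).natAbs)
                + γ (((d : ℤ) * e + (s : ℕ) - (r : ℕ)).natAbs)) := by
        rw [two_mul]
        nth_rewrite 2 [hswap]
        rw [← Finset.sum_add_distrib]
        exact Finset.sum_congr rfl fun r _ => (Finset.sum_add_distrib).symm
      rw [expand]
      calc (∑ r : Fin d, ∑ s : Fin d,
            (γ (((d : ℤ) * e + (r : ℕ) - (s : ℕ)).natAbs)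
              + γ (((d : ℤ) * e + (s : ℕ) - (r : ℕ)).natAbs)))
          ≤ ∑ _r : Fin d, ∑ _s : Fin d, 2 * γ (((d : ℤ) * e).natAbs) :=
            Finset.sum_le_sum fun r _ => Finset.sum_le_sum fun s _ => key r s
        _ = 2 * ((d : ℝ) ^ 2 * γ (((d : ℤ) * e).natAbs)) := by
            simp [Finset.sum_const, Finset.card_univ]
            ring
    linarith

/-- Theorem 5.2: for a stationary sequence `X_1, …, X_{nd}` with nonnegative,
nonincreasing autocovariance `γ` satisfying the per-interval concavity condition,
the variance of the coarse average `ȳ_b = (1/n)·Σ_k X_{(k−1)d+1}` and the variance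
of the full average `ȳ_a = (1/(nd))·Σ_i X_i` satisfy
`Var(ȳ_b)/d ≤ Var(ȳ_a) ≤ Var(ȳ_b)`. -/
theorem coarse_full_variance_bounds
    {Ω : Type*} [MeasurableSpace Ω] (μ : Measure Ω) [IsProbabilityMeasure μ]
    (n d : ℕ) (hn : 1 ≤ n) (hd : 1 ≤ d) (X : ℕ → Ω → ℝ) (γ : ℕ → ℝ)
    (hL2 : ∀ i ∈ Icc 1 (n * d), MemLp (X i) 2 μ)
    (hmean : ∀ i ∈ Icc 1 (n * d), ∀ j ∈ Icc 1 (n * d),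
      ∫ ω, X i ω ∂μ = ∫ ω, X j ω ∂μ)
    (hcov : ∀ i ∈ Icc 1 (n * d), ∀ j ∈ Icc 1 (n * d),
      ∫ ω, (X i ω - ∫ ω', X i ω' ∂μ) * (X j ω - ∫ ω', X j ω' ∂μ) ∂μ
        = γ (((i : ℤ) - (j : ℤ)).natAbs))
    (hγpos : ∀ t, 0 ≤ γ t) (hγanti : Antitone γ)
    (hconc : ∀ k, 1 ≤ k → ∀ δ, 1 ≤ δ → δ ≤ d - 1 →
      γ (d * k - δ) + γ (d * k + δ) ≤ 2 * γ (d * k)) :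
    variance (fun ω => (1 / (n : ℝ)) * ∑ k ∈ Icc 1 n, X ((k - 1) * d + 1) ω) μ / (d : ℝ)
        ≤ variance (fun ω => (1 / ((n : ℝ) * (d : ℝ))) * ∑ i ∈ Icc 1 (n * d), X i ω) μ ∧
      variance (fun ω => (1 / ((n : ℝ) * (d : ℝ))) * ∑ i ∈ Icc 1 (n * d), X i ω) μ
        ≤ variance (fun ω => (1 / (n : ℝ)) * ∑ k ∈ Icc 1 n, X ((k - 1) * d + 1) ω) μ := by
  classical
  have hidx : ∀ k ∈ Icc 1 n, (k - 1) * d + 1 ∈ Icc 1 (n * d) := by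
    intro k hk
    simp only [Finset.mem_Icc] at *
    refine ⟨by omega, ?_⟩
    have h1 : (k - 1) + 1 ≤ n := by omega
    calc (k - 1) * d + 1 ≤ (k - 1) * d + d := by omega
      _ = ((k - 1) + 1) * d := by ring
      _ ≤ n * d := Nat.mul_le_mul_right d h1
  -- abbreviations
  set SA : ℝ := ∑ k : Fin n, ∑ l : Fin n, ∑ r : Fin d, ∑ s : Fin d,
      γ (((d : ℤ) * (((k : ℕ) : ℤ) - ((l : ℕ) : ℤ)) + (r : ℕ) - (s : ℕ)).natAbs) with hSA
  set SB : ℝ := ∑ k : Fin n, ∑ l : Fin n,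
      γ (((d : ℤ) * (((k : ℕ) : ℤ) - ((l : ℕ) : ℤ))).natAbs) with hSB
  -- variance of the full average
  have hVa : variance (fun ω => (1 / ((n : ℝ) * (d : ℝ))) * ∑ i ∈ Icc 1 (n * d), X i ω) μ
      = (1 / ((n : ℝ) * (d : ℝ))) ^ 2 * SA := by
    rw [variance_const_mul_sum μ (Icc 1 (n * d)) _ X hL2]
    congr 1
    calc ∑ i ∈ Icc 1 (n * d), ∑ j ∈ Icc 1 (n * d),
          ∫ ω, (X i ω - ∫ ω', X i ω' ∂μ) * (X j ω - ∫ ω', X j ω' ∂μ) ∂μ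
        = ∑ i ∈ Icc 1 (n * d), ∑ j ∈ Icc 1 (n * d),
            γ (((i : ℤ) - (j : ℤ)).natAbs) :=
          Finset.sum_congr rfl fun i hi => Finset.sum_congr rfl fun j hj => hcov i hi j hj
      _ = ∑ k : Fin n, ∑ r : Fin d, ∑ l : Fin n, ∑ s : Fin d,
            γ (((((k : ℕ) * d + (r : ℕ) + 1 : ℕ) : ℤ)
              - (((l : ℕ) * d + (s : ℕ) + 1 : ℕ) : ℤ)).natAbs) := by
          rw [sum_Icc_mul_eq n d]
          exact Finset.sum_congr rfl fun k _ => Finset.sum_congr rfl fun r _ =>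
            sum_Icc_mul_eq n d _
      _ = ∑ k : Fin n, ∑ l : Fin n, ∑ r : Fin d, ∑ s : Fin d,
            γ (((((k : ℕ) * d + (r : ℕ) + 1 : ℕ) : ℤ)
              - (((l : ℕ) * d + (s : ℕ) + 1 : ℕ) : ℤ)).natAbs) :=
          Finset.sum_congr rfl fun k _ => Finset.sum_comm
      _ = SA := by
          rw [hSA]
          refine Finset.sum_congr rfl fun k _ => Finset.sum_congr rfl fun l _ =>
            Finset.sum_congr rfl fun r _ => Finset.sum_congr rfl fun s _ => ?_
          congr 1
          congr 1
          push_cast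
          ring
  -- variance of the coarse average
  have hVb : variance (fun ω => (1 / (n : ℝ)) * ∑ k ∈ Icc 1 n, X ((k - 1) * d + 1) ω) μ
      = (1 / (n : ℝ)) ^ 2 * SB := by
    rw [variance_const_mul_sum μ (Icc 1 n) _ (fun k => X ((k - 1) * d + 1))
      (fun k hk => hL2 _ (hidx k hk))]
    congr 1
    calc ∑ k ∈ Icc 1 n, ∑ l ∈ Icc 1 n,
          ∫ ω, (X ((k - 1) * d + 1) ω - ∫ ω', X ((k - 1) * d + 1) ω' ∂μ)
            * (X ((l - 1) * d + 1) ω - ∫ ω', X ((l - 1) * d + 1) ω' ∂μ) ∂μ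
        = ∑ k ∈ Icc 1 n, ∑ l ∈ Icc 1 n,
            γ (((((k - 1) * d + 1 : ℕ) : ℤ) - ((((l - 1) * d + 1 : ℕ)) : ℤ)).natAbs) :=
          Finset.sum_congr rfl fun k hk => Finset.sum_congr rfl fun l hl =>
            hcov _ (hidx k hk) _ (hidx l hl)
      _ = ∑ k : Fin n, ∑ l : Fin n,
            γ ((((((k : ℕ) + 1) - 1) * d + 1 : ℕ) : ℤ)
              - ((((((l : ℕ) + 1) - 1) * d + 1 : ℕ)) : ℤ)).natAbs := by
          rw [sum_Icc_one_eq n]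
          exact Finset.sum_congr rfl fun k _ => sum_Icc_one_eq n _
      _ = SB := by
          rw [hSB]
          refine Finset.sum_congr rfl fun k _ => Finset.sum_congr rfl fun l _ => ?_
          congr 1
          congr 1
          simp only [Nat.add_sub_cancel]
          push_cast
          ring
  -- the two sum inequalities
  have hlow : (d : ℝ) * SB ≤ SA := by
    rw [hSA, hSB, Finset.mul_sum]
    refine Finset.sum_le_sum fun k _ => ?_
    rw [Finset.mul_sum]
    refine Finset.sum_le_sum fun l _ => ?_
    exact (block_bounds d hd γ hγpos hγanti hconc (((k : ℕ) : ℤ) - ((l : ℕ) : ℤ))).1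
  have hup : SA ≤ (d : ℝ) ^ 2 * SB := by
    rw [hSA, hSB, Finset.mul_sum]
    refine Finset.sum_le_sum fun k _ => ?_
    rw [Finset.mul_sum]
    refine Finset.sum_le_sum fun l _ => ?_
    exact (block_bounds d hd γ hγpos hγanti hconc (((k : ℕ) : ℤ) - ((l : ℕ) : ℤ))).2
  have hn0 : (0 : ℝ) < (n : ℝ) := by exact_mod_cast hn
  have hd0 : (0 : ℝ) < (d : ℝ) := by exact_mod_cast hd
  constructor
  · rw [hVa, hVb, div_le_iff₀ hd0]
    have c1 : (1 / (n : ℝ)) ^ 2 * SB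
        = ((1 / ((n : ℝ) * (d : ℝ))) ^ 2 * (d : ℝ)) * ((d : ℝ) * SB) := by
      field_simp
    have c2 : (1 / ((n : ℝ) * (d : ℝ))) ^ 2 * SA * (d : ℝ)
        = ((1 / ((n : ℝ) * (d : ℝ))) ^ 2 * (d : ℝ)) * SA := by ring
    rw [c1, c2]
    exact mul_le_mul_of_nonneg_left hlow (by positivity)
  · rw [hVa, hVb]
    have c3 : (1 / (n : ℝ)) ^ 2 * SB
        = (1 / ((n : ℝ) * (d : ℝ))) ^ 2 * ((d : ℝ) ^ 2 * SB) := by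
      field_simp
    rw [c3]
    exact mul_le_mul_of_nonneg_left hup (by positivity)
end
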